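/- (Main theorem: stationarity of the quantum graph walk characterizes quantum graph eigenfunctions) Let (L, λ, A) be quantum-graph parameters and k a nonzero real. Given a ∈ ℂ^{D(G)} with components a_{(i,j)}, define for each arc (i,j) the function Ψ_{(i,j)} : ℝ → ℂ by Ψ_{(i,j)}(x) = a_{(i,j)}·e^{−i(k+A_{(i,j)})x} + a_{(j,i)}·e^{−i(k+A_{(j,i)})(L_{{i,j}}−x)}. Then the following are equivalent: (1) the family (Ψ_{(i,j)}) satisfies the quantum graph boundary conditions, namely for every vertex i ∈ V there exists φ_i ∈ ℂ such that Ψ_{(i,j)}(0) = φ_i for all j ∈ N(i), and Σ_{j∈N(i)} (−i·Ψ_{(i,j)}'(0) + A_{(i,j)}·Ψ_{(i,j)}(0)) = −i·λ_i·φ_i; (2) a is a fixed point of the quantum graph walk: U^{(L,λ,A)}(k)·a = a. -/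

import Mathlib

open Matrix Complex BigOperators

section QWFramework

variable {V : Type*}

instance arcDecPred (G : SimpleGraph V) [DecidableRel G.Adj] :
    DecidablePred fun p : V × V => G.Adj p.1 p.2 :=
  fun p => inferInstanceAs (Decidable (G.Adj p.1 p.2))

instance nbrDecPred (G : SimpleGraph V) [DecidableRel G.Adj] (u : V) :
    DecidablePred (G.Adj u) :=
  fun w => inferInstanceAs (Decidable (G.Adj u w))

/-- The symmetric arc set `D(G)` of a graph: ordered pairs of adjacent vertices. -/
abbrev Arc (G : SimpleGraph V) : Type _ := {p : V × V // G.Adj p.1 p.2}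

variable [Fintype V] [DecidableEq V]

/-- The shift (permutation) operator `S_σ` of a shift family `σ`, acting on `ℂ^{D(G)}`
by `S_σ |i,j⟩ = |j, σ_j(i)⟩`. -/
noncomputable def shiftOp (G : SimpleGraph V) [DecidableRel G.Adj]
    (σ : ∀ u : V, Equiv.Perm {w : V // G.Adj u w}) :
    Matrix (Arc G) (Arc G) ℂ :=
  fun a b => if a.1.1 = b.1.2 ∧ a.1.2 = (σ b.1.2 ⟨b.1.1, b.2.symm⟩).1 then 1 else 0

/-- The flip-flop shift family: the identity permutation at every vertex. -/
def ffFam (G : SimpleGraph V) : ∀ u : V, Equiv.Perm {w : V // G.Adj u w} :=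
  fun _ => Equiv.refl _

/-- The flip-flop shift operator `S`, with `S|i,j⟩ = |j,i⟩`. -/
noncomputable def ffShift (G : SimpleGraph V) [DecidableRel G.Adj] : Matrix (Arc G) (Arc G) ℂ :=
  shiftOp G (ffFam G)

/-- The block-diagonal coin operator `C = ⊕_u H_u`, acting by
`C|i,j⟩ = Σ_{k∈N(i)} (H_i)_{k,j} |i,k⟩`. -/
noncomputable def coinOp (G : SimpleGraph V) [DecidableRel G.Adj]
    (H : ∀ u : V, Matrix {w : V // G.Adj u w} {w : V // G.Adj u w} ℂ) :
    Matrix (Arc G) (Arc G) ℂ :=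
  fun a b => if h : a.1.1 = b.1.1 then H b.1.1 ⟨a.1.2, by rw [← h]; exact a.2⟩ ⟨b.1.2, b.2⟩ else 0

/-- The G-type (Gudder type) coined quantum walk `U^G_σ[H] = C·S_σ`. -/
noncomputable def gWalk (G : SimpleGraph V) [DecidableRel G.Adj]
    (σ : ∀ u : V, Equiv.Perm {w : V // G.Adj u w})
    (H : ∀ u : V, Matrix {w : V // G.Adj u w} {w : V // G.Adj u w} ℂ) :
    Matrix (Arc G) (Arc G) ℂ :=
  coinOp G H * shiftOp G σ

/-- The A-type (Ambainis type) coined quantum walk `U^A_σ[H] = S_σ·C`. -/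
noncomputable def aWalk (G : SimpleGraph V) [DecidableRel G.Adj]
    (σ : ∀ u : V, Equiv.Perm {w : V // G.Adj u w})
    (H : ∀ u : V, Matrix {w : V // G.Adj u w} {w : V // G.Adj u w} ℂ) :
    Matrix (Arc G) (Arc G) ℂ :=
  shiftOp G σ * coinOp G H

end QWFramework

/-- The arc value of an edge potential: `A_{(i,j)} = sgn(j−i)·A_{{i,j}}`. -/
def arcPot {V : Type*} [LinearOrder V] (Ae : V → V → ℝ) (i j : V) : ℝ :=
  if i < j then Ae i j else -(Ae i j)

/-- The local coin `H_j(k)` of the quantum graph walk at vertex `j`: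
`(H_j(k))_{m,l} = (2/(d_j + iλ_j/k) − δ_{l,m})·e^{iL_{{j,m}}(k − A_{(j,m)})}`. -/
noncomputable def qgCoin {V : Type*} [Fintype V] [LinearOrder V]
    (G : SimpleGraph V) [DecidableRel G.Adj]
    (L : V → V → ℝ) (lam : V → ℝ) (Ae : V → V → ℝ) (k : ℝ) (j : V) :
    Matrix {w : V // G.Adj j w} {w : V // G.Adj j w} ℂ :=
  fun m l =>
    (2 / ((G.degree j : ℂ) + Complex.I * (lam j : ℂ) / (k : ℂ)) - if l = m then 1 else 0) *
      Complex.exp (Complex.I * (L j m.1 : ℂ) * ((k : ℂ) - (arcPot Ae j m.1 : ℂ)))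

/-- The quantum graph walk `U^{(L,λ,A)}(k) = S·C(k)`: the A-type walk with flip-flop shift
and coins `H_j(k)`. -/
noncomputable def qgWalk {V : Type*} [Fintype V] [LinearOrder V]
    (G : SimpleGraph V) [DecidableRel G.Adj]
    (L : V → V → ℝ) (lam : V → ℝ) (Ae : V → V → ℝ) (k : ℝ) :
    Matrix (Arc G) (Arc G) ℂ :=
  ffShift G * coinOp G (qgCoin G L lam Ae k)

/-- The eigenfunction on arc `(i,j)` built from amplitudes `a`:
`Ψ_{(i,j)}(x) = a_{(i,j)}·e^{−i(k+A_{(i,j)})x} + a_{(j,i)}·e^{−i(k+A_{(j,i)})(L_{{i,j}}−x)}`. -/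
noncomputable def qgPsi {V : Type*} [Fintype V] [LinearOrder V]
    (G : SimpleGraph V) [DecidableRel G.Adj]
    (L : V → V → ℝ) (Ae : V → V → ℝ) (k : ℝ) (a : Arc G → ℂ)
    (i j : V) (h : G.Adj i j) : ℝ → ℂ :=
  fun x =>
    a ⟨(i, j), h⟩ * Complex.exp (-Complex.I * ((k : ℂ) + (arcPot Ae i j : ℂ)) * (x : ℂ)) +
    a ⟨(j, i), h.symm⟩ *
      Complex.exp (-Complex.I * ((k : ℂ) + (arcPot Ae j i : ℂ)) * ((L i j - x : ℝ) : ℂ))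

section AuxShift
variable {V : Type*} [Fintype V] [DecidableEq V]

def arcSigmaEquiv (G : SimpleGraph V) [DecidableRel G.Adj] :
    (Σ u : V, {w : V // G.Adj u w}) ≃ Arc G where
  toFun q := ⟨(q.1, q.2.1), q.2.2⟩
  invFun p := ⟨p.1.1, p.1.2, p.2⟩
  left_inv _ := rfl
  right_inv _ := rfl

lemma ffShift_mulVec (G : SimpleGraph V) [DecidableRel G.Adj] (v : Arc G → ℂ)
    (i j : V) (h : G.Adj i j) :
    (ffShift G).mulVec v ⟨(i,j), h⟩ = v ⟨(j,i), h.symm⟩ := by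
  unfold ffShift shiftOp ffFam Matrix.mulVec dotProduct
  rw [Finset.sum_eq_single (⟨(j,i), h.symm⟩ : Arc G)]
  · simp
  · rintro ⟨⟨p, q⟩, hb⟩ - hne
    simp only [Equiv.refl_apply]
    refine mul_eq_zero_of_left (if_neg ?_) _
    rintro ⟨rfl, rfl⟩
    exact hne rfl
  · simp

lemma coinOp_mulVec (G : SimpleGraph V) [DecidableRel G.Adj]
    (H : ∀ u : V, Matrix {w : V // G.Adj u w} {w : V // G.Adj u w} ℂ)
    (v : Arc G → ℂ) (i j : V) (h : G.Adj i j) :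
    (coinOp G H).mulVec v ⟨(i,j), h⟩
      = ∑ l : {w : V // G.Adj i w}, H i ⟨j, h⟩ l * v ⟨(i, l.1), l.2⟩ := by
  unfold coinOp Matrix.mulVec dotProduct
  rw [← Equiv.sum_comp (arcSigmaEquiv G), ← Finset.univ_sigma_univ, Finset.sum_sigma]
  rw [Finset.sum_eq_single i]
  · refine Finset.sum_congr rfl fun l _ => ?_
    simp only [arcSigmaEquiv, Equiv.coe_fn_mk]
    simp
  · intro u _ hne
    apply Finset.sum_eq_zero
    intro l _
    simp only [arcSigmaEquiv, Equiv.coe_fn_mk]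
    exact mul_eq_zero_of_left (dif_neg (fun hh : i = u => hne hh.symm)) _
  · simp

end AuxShift

lemma deriv_aux (a1 a2 c1 c2 : ℂ) (L : ℝ) :
    deriv (fun x : ℝ => a1 * Complex.exp (c1 * (x:ℂ)) + a2 * Complex.exp (c2 * ((L - x : ℝ):ℂ))) 0
      = a1 * c1 - a2 * c2 * Complex.exp (c2 * (L:ℂ)) := by
  have h0 : HasDerivAt (fun x : ℝ => (x:ℂ)) 1 0 := by
    simpa using (hasDerivAt_id (0:ℝ)).ofReal_comp
  have h1 : HasDerivAt (fun x : ℝ => c1 * (x:ℂ)) c1 0 := by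
    simpa using h0.const_mul c1
  have h2 : HasDerivAt (fun x : ℝ => c2 * ((L - x : ℝ):ℂ)) (-c2) 0 := by
    have : HasDerivAt (fun x : ℝ => ((L - x : ℝ):ℂ)) (-1) 0 := by
      simp only [Complex.ofReal_sub]
      simpa using (h0.const_sub (L:ℂ))
    simpa using this.const_mul c2
  have H : HasDerivAt (fun x : ℝ => a1 * Complex.exp (c1 * (x:ℂ)) + a2 * Complex.exp (c2 * ((L - x : ℝ):ℂ)))
      (a1 * (Complex.exp (c1 * ((0:ℝ):ℂ)) * c1) + a2 * (Complex.exp (c2 * (((L - 0 : ℝ)):ℂ)) * (-c2))) 0 :=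
    ((h1.cexp).const_mul a1).add ((h2.cexp).const_mul a2)
  rw [H.deriv]
  simp
  ring

lemma alg1 (d S lam k : ℂ) (hk : k ≠ 0) (hD : d + Complex.I*lam/k ≠ 0) :
    d * (k * (2/(d + Complex.I*lam/k) * S)) - 2*k*S
      = -Complex.I*lam*(2/(d+Complex.I*lam/k)*S) := by
  have hN : d * k + Complex.I * lam ≠ 0 := by
    intro h0
    apply hD
    field_simp
    linear_combination h0
  rw [show d + Complex.I*lam/k = (d*k + Complex.I*lam)/k by field_simp]
  field_simp
  ring

lemma arcPot_anti {V : Type*} [LinearOrder V] (Ae : V → V → ℝ)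
    (hAs : ∀ i j, Ae i j = Ae j i) {i j : V} (hij : i ≠ j) :
    arcPot Ae j i = -arcPot Ae i j := by
  unfold arcPot
  rcases lt_or_gt_of_ne hij with h | h
  · rw [if_neg (not_lt_of_gt h), if_pos h, hAs]
  · rw [if_pos h, if_neg (not_lt_of_gt h), hAs, neg_neg]

section PsiLemmas

variable {V : Type*} [Fintype V] [LinearOrder V]
  (G : SimpleGraph V) [DecidableRel G.Adj]
  (L : V → V → ℝ) (lam : V → ℝ) (Ae : V → V → ℝ) (k : ℝ) (a : Arc G → ℂ)

lemma qgPsi_zero (hAs : ∀ i j, Ae i j = Ae j i) (i j : V) (h : G.Adj i j) :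
    qgPsi G L Ae k a i j h 0
      = a ⟨(i,j), h⟩ + a ⟨(j,i), h.symm⟩ *
          Complex.exp (-Complex.I * ((k:ℂ) - (arcPot Ae i j : ℂ)) * (L i j : ℂ)) := by
  unfold qgPsi
  rw [arcPot_anti Ae hAs h.ne']
  push_cast
  ring_nf
  simp

lemma qgPsi_deriv (hAs : ∀ i j, Ae i j = Ae j i) (i j : V) (h : G.Adj i j) :
    deriv (qgPsi G L Ae k a i j h) 0
      = a ⟨(i,j), h⟩ * (-Complex.I * ((k:ℂ) + (arcPot Ae i j : ℂ)))
        - a ⟨(j,i), h.symm⟩ * (-Complex.I * ((k:ℂ) - (arcPot Ae i j : ℂ))) *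
            Complex.exp (-Complex.I * ((k:ℂ) - (arcPot Ae i j : ℂ)) * (L i j : ℂ)) := by
  unfold qgPsi
  rw [deriv_aux]
  rw [arcPot_anti Ae hAs h.ne']
  push_cast
  ring

lemma qgT_eq (hAs : ∀ i j, Ae i j = Ae j i) (i j : V) (h : G.Adj i j) :
    -Complex.I * deriv (qgPsi G L Ae k a i j h) 0
        + (arcPot Ae i j : ℂ) * qgPsi G L Ae k a i j h 0
      = (k:ℂ) * qgPsi G L Ae k a i j h 0 - 2 * (k:ℂ) * a ⟨(i,j), h⟩ := by
  rw [qgPsi_deriv G L Ae k a hAs i j h, qgPsi_zero G L Ae k a hAs i j h]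
  set A := (arcPot Ae i j : ℂ)
  set E := Complex.exp (-Complex.I * ((k:ℂ) - A) * (L i j : ℂ))
  set a1 := a ⟨(i,j), h⟩
  set a2 := a ⟨(j,i), h.symm⟩
  linear_combination (((k:ℂ) + A) * a1 - ((k:ℂ) - A) * a2 * E) * Complex.I_mul_I

lemma qgWalk_apply (i m : V) (h : G.Adj i m) :
    (qgWalk G L lam Ae k).mulVec a ⟨(m,i), h.symm⟩
      = Complex.exp (Complex.I * (L i m : ℂ) * ((k:ℂ) - (arcPot Ae i m : ℂ))) *
          ((2 / ((G.degree i : ℂ) + Complex.I * (lam i : ℂ) / (k:ℂ))) *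
              (∑ l : {w : V // G.Adj i w}, a ⟨(i, l.1), l.2⟩)
            - a ⟨(i,m), h⟩) := by
  unfold qgWalk
  rw [← Matrix.mulVec_mulVec, ffShift_mulVec, coinOp_mulVec]
  set w := 2 / ((G.degree i : ℂ) + Complex.I * (lam i : ℂ) / (k:ℂ)) with hw
  set E := Complex.exp (Complex.I * (L i m : ℂ) * ((k:ℂ) - (arcPot Ae i m : ℂ))) with hE
  have key : ∀ l : {w : V // G.Adj i w},
      qgCoin G L lam Ae k i ⟨m, h⟩ l * a ⟨(i, l.1), l.2⟩
        = E * (w * a ⟨(i, l.1), l.2⟩)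
          - (if l = (⟨m, h⟩ : {w : V // G.Adj i w}) then E * a ⟨(i, l.1), l.2⟩ else 0) := by
    intro l
    unfold qgCoin
    rw [← hw, ← hE]
    split_ifs with hl <;> ring
  rw [Finset.sum_congr rfl fun l _ => key l, Finset.sum_sub_distrib]
  simp only [← mul_assoc]
  rw [← Finset.mul_sum,
    Finset.sum_ite_eq' Finset.univ (⟨m, h⟩ : {w : V // G.Adj i w})
      (fun l => E * a ⟨(i, l.1), l.2⟩), if_pos (Finset.mem_univ _)]
  ring

lemma qg_vertex_cond (hAs : ∀ i j, Ae i j = Ae j i) (hk : k ≠ 0) (i : V) :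
    (∃ φ : ℂ,
        (∀ m : {w : V // G.Adj i w}, qgPsi G L Ae k a i m.1 m.2 0 = φ) ∧
        (∑ m : {w : V // G.Adj i w},
            (-Complex.I * deriv (qgPsi G L Ae k a i m.1 m.2) 0 +
              (arcPot Ae i m.1 : ℂ) * qgPsi G L Ae k a i m.1 m.2 0)) =
          -Complex.I * (lam i : ℂ) * φ)
    ↔ (∀ m : {w : V // G.Adj i w}, qgPsi G L Ae k a i m.1 m.2 0
          = (2 / ((G.degree i : ℂ) + Complex.I * (lam i : ℂ) / (k:ℂ))) *
              ∑ l : {w : V // G.Adj i w}, a ⟨(i, l.1), l.2⟩) := by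
  set D := ((G.degree i : ℂ) + Complex.I * (lam i : ℂ) / (k:ℂ)) with hD
  set S := ∑ l : {w : V // G.Adj i w}, a ⟨(i, l.1), l.2⟩ with hS
  have hTsum : (∑ m : {w : V // G.Adj i w},
        (-Complex.I * deriv (qgPsi G L Ae k a i m.1 m.2) 0 +
          (arcPot Ae i m.1 : ℂ) * qgPsi G L Ae k a i m.1 m.2 0))
      = (∑ m : {w : V // G.Adj i w}, (k:ℂ) * qgPsi G L Ae k a i m.1 m.2 0) - 2 * k * S := by
    rw [Finset.sum_congr rfl fun m _ => qgT_eq G L Ae k a hAs i m.1 m.2,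
      Finset.sum_sub_distrib, hS, Finset.mul_sum]
  have hcard : (Fintype.card {w : V // G.Adj i w}) = G.degree i := by
    rw [← SimpleGraph.card_neighborSet_eq_degree]
    exact Fintype.card_congr (Equiv.subtypeEquivRight fun w => by
      simp [SimpleGraph.mem_neighborSet])
  rcases isEmpty_or_nonempty {w : V // G.Adj i w} with hE | hNE
  · constructor
    · intro _ m
      exact (hE.false m).elim
    · intro _
      refine ⟨0, fun m => (hE.false m).elim, ?_⟩
      simp [Finset.univ_eq_empty]
  · have hd : 0 < G.degree i := by
      rw [← hcard]
      exact Fintype.card_pos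
    have hDne : D ≠ 0 := by
      intro hzero
      have hre := congrArg Complex.re hzero
      simp [hD, Complex.div_ofReal_re, Complex.add_re, Complex.mul_re] at hre
      have : (0:ℝ) < (G.degree i : ℝ) := by exact_mod_cast hd
      linarith
    constructor
    · rintro ⟨φ, hc, hcur⟩ m
      rw [hTsum, Finset.sum_congr rfl (fun m _ => by rw [hc m]), Finset.sum_const,
        Finset.card_univ, hcard, nsmul_eq_mul] at hcur
      -- hcur : (d:ℂ) * (k * φ) - 2*k*S = -I*λ*φ
      have hkc : (k:ℂ) ≠ 0 := by exact_mod_cast hk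
      have key : φ * D = 2 * S := by
        rw [hD]
        field_simp
        linear_combination hcur
      rw [hc m, div_mul_eq_mul_div, eq_div_iff hDne]
      linear_combination key
    · intro hQ
      refine ⟨2 / D * S, fun m => hQ m, ?_⟩
      rw [hTsum, Finset.sum_congr rfl (fun m _ => by rw [hQ m]), Finset.sum_const,
        Finset.card_univ, hcard, nsmul_eq_mul]
      have hkc : (k:ℂ) ≠ 0 := by exact_mod_cast hk
      rw [hD] at hDne ⊢
      exact alg1 _ _ _ _ hkc hDne
end PsiLemmas
/-- main theorem: stationarity of the quantum graph walk characterizes quantum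
graph eigenfunctions: the family `(Ψ_{(i,j)})` built from `a ∈ ℂ^{D(G)}` satisfies the quantum
graph boundary conditions at every vertex if and only if `U^{(L,λ,A)}(k)·a = a`. -/
theorem qgWalk_fixed_point_iff_boundary_conditions {V : Type*} [Fintype V] [LinearOrder V]
    (G : SimpleGraph V) [DecidableRel G.Adj] (hG : G.Connected)
    (L : V → V → ℝ) (hLs : ∀ i j, L i j = L j i) (hLpos : ∀ i j, G.Adj i j → 0 < L i j)
    (lam : V → ℝ) (hlam : ∀ i, 0 ≤ lam i)
    (Ae : V → V → ℝ) (hAs : ∀ i j, Ae i j = Ae j i)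
    (k : ℝ) (hk : k ≠ 0)
    (a : Arc G → ℂ) :
    (∀ i : V, ∃ φ : ℂ,
        (∀ m : {w : V // G.Adj i w}, qgPsi G L Ae k a i m.1 m.2 0 = φ) ∧
        (∑ m : {w : V // G.Adj i w},
            (-Complex.I * deriv (qgPsi G L Ae k a i m.1 m.2) 0 +
              (arcPot Ae i m.1 : ℂ) * qgPsi G L Ae k a i m.1 m.2 0)) =
          -Complex.I * (lam i : ℂ) * φ) ↔
      (qgWalk G L lam Ae k).mulVec a = a := by
  have keyB := forall_congr' fun i => qg_vertex_cond G L lam Ae k a hAs hk i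
  rw [keyB]
  constructor
  · intro hQ
    funext p
    obtain ⟨⟨mm, ii⟩, hp⟩ := p
    have h2 : G.Adj ii mm := hp.symm
    have hU : (qgWalk G L lam Ae k).mulVec a ⟨(mm, ii), hp⟩
        = (qgWalk G L lam Ae k).mulVec a ⟨(mm, ii), h2.symm⟩ := rfl
    rw [hU, qgWalk_apply G L lam Ae k a ii mm h2]
    have hq := hQ ii ⟨mm, h2⟩
    rw [qgPsi_zero G L Ae k a hAs ii mm h2] at hq
    set E1 := Complex.exp (Complex.I * (L ii mm : ℂ) * ((k:ℂ) - (arcPot Ae ii mm : ℂ))) with hE1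
    set E2 := Complex.exp (-Complex.I * ((k:ℂ) - (arcPot Ae ii mm : ℂ)) * (L ii mm : ℂ)) with hE2
    have hprod : E1 * E2 = 1 := by
      rw [hE1, hE2, ← Complex.exp_add,
        show Complex.I * (L ii mm : ℂ) * ((k:ℂ) - (arcPot Ae ii mm : ℂ))
            + -Complex.I * ((k:ℂ) - (arcPot Ae ii mm : ℂ)) * (L ii mm : ℂ) = 0 by ring,
        Complex.exp_zero]
    linear_combination a ⟨(mm, ii), h2.symm⟩ * hprod - E1 * hq
  · intro hU i m
    have hthis := congrFun hU (⟨(m.1, i), m.2.symm⟩ : Arc G)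
    rw [qgWalk_apply G L lam Ae k a i m.1 m.2] at hthis
    rw [qgPsi_zero G L Ae k a hAs i m.1 m.2]
    set E1 := Complex.exp (Complex.I * (L i m.1 : ℂ) * ((k:ℂ) - (arcPot Ae i m.1 : ℂ))) with hE1
    set E2 := Complex.exp (-Complex.I * ((k:ℂ) - (arcPot Ae i m.1 : ℂ)) * (L i m.1 : ℂ)) with hE2
    have hprod : E1 * E2 = 1 := by
      rw [hE1, hE2, ← Complex.exp_add,
        show Complex.I * (L i m.1 : ℂ) * ((k:ℂ) - (arcPot Ae i m.1 : ℂ))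
            + -Complex.I * ((k:ℂ) - (arcPot Ae i m.1 : ℂ)) * (L i m.1 : ℂ) = 0 by ring,
        Complex.exp_zero]
    linear_combination
      ((2 / ((G.degree i : ℂ) + Complex.I * (lam i : ℂ) / (k:ℂ))) *
          (∑ l : {w : V // G.Adj i w}, a ⟨(i, l.1), l.2⟩)
        - a ⟨(i, m.1), m.2⟩) * hprod - E2 * hthis
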